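/- Let C be a category of noncrossing colored partitions with I(C) = ℤ \ {0}, S(C) = ℤ_s for a finite s ≥ 1 (π_k ∼ π_{k'} iff k ≡ k' mod s), and J(C) = nℤ. Then n divides s. -/

import Mathlib

open scoped Classical

/-- A two-colored partition with `k` upper and `l` lower points; `true` = white. -/
structure CPartition where
  k : ℕ
  l : ℕ
  uc : Fin k → Bool
  lc : Fin l → Bool
  rel : Setoid (Fin k ⊕ Fin l)

namespace CPartition

/-- The disjoint union of two setoids. -/
def sumSetoid {X Y : Type*} (p : Setoid X) (q : Setoid Y) : Setoid (X ⊕ Y) where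
  r := Sum.LiftRel p.r q.r
  iseqv := by
    refine ⟨fun x => ?_, fun h => ?_, fun h h' => ?_⟩
    · cases x with
      | inl a => exact Sum.LiftRel.inl (p.iseqv.refl a)
      | inr b => exact Sum.LiftRel.inr (q.iseqv.refl b)
    · cases h with
      | inl h => exact Sum.LiftRel.inl (p.iseqv.symm h)
      | inr h => exact Sum.LiftRel.inr (q.iseqv.symm h)
    · cases h with
      | inl h =>
        cases h' with
        | inl h' => exact Sum.LiftRel.inl (p.iseqv.trans h h')
      | inr h =>
        cases h' with
        | inr h' => exact Sum.LiftRel.inr (q.iseqv.trans h h')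

/-- Horizontal concatenation `p ⊗ q`. -/
def tensor (p q : CPartition) : CPartition where
  k := p.k + q.k
  l := p.l + q.l
  uc := fun i => Sum.elim p.uc q.uc (finSumFinEquiv.symm i)
  lc := fun j => Sum.elim p.lc q.lc (finSumFinEquiv.symm j)
  rel := Setoid.comap
    (fun x => Equiv.sumSumSumComm (Fin p.k) (Fin q.k) (Fin p.l) (Fin q.l)
      (Sum.map (fun i => finSumFinEquiv.symm i) (fun j => finSumFinEquiv.symm j) x))
    (sumSetoid p.rel q.rel)

/-- Reflection `p*` (exchange the two rows, keeping colors). -/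
def reflect (p : CPartition) : CPartition where
  k := p.l
  l := p.k
  uc := p.lc
  lc := p.uc
  rel := Setoid.comap Sum.swap p.rel

/-- The conjugate partition `p̄` : rotate all upper points to the lower row and
conversely (order is reversed and colors are switched). -/
def conj (p : CPartition) : CPartition where
  k := p.l
  l := p.k
  uc := fun i => !(p.lc i.rev)
  lc := fun j => !(p.uc j.rev)
  rel := Setoid.comap
    (Sum.elim (fun i => Sum.inr i.rev) (fun j => Sum.inl j.rev)) p.rel

/-- Vertical concatenation: `p` on top, then `q` below (requires `p.l = q.k`).
Points of the middle row are identified and removed, blocks being joined along them. -/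
def vcomp (p q : CPartition) (h : p.l = q.k) : CPartition where
  k := p.k
  l := q.l
  uc := p.uc
  lc := q.lc
  rel := Setoid.comap (Sum.map id Sum.inr)
    (Relation.EqvGen.setoid (fun x y : Fin p.k ⊕ (Fin p.l ⊕ Fin q.l) =>
      (∃ a b, p.rel.r a b ∧ Sum.map id Sum.inl a = x ∧ Sum.map id Sum.inl b = y) ∨
      (∃ a b, q.rel.r a b ∧
        Sum.inr (Sum.map (Fin.cast h.symm) id a) = x ∧
        Sum.inr (Sum.map (Fin.cast h.symm) id b) = y)))

/-- Rotation: move the leftmost upper point to the leftmost lower position,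
switching its color. -/
def rotDown (p : CPartition) (m : ℕ) (h : p.k = m + 1) : CPartition where
  k := m
  l := p.l + 1
  uc := fun i => p.uc (Fin.cast h.symm i.succ)
  lc := fun j => Fin.cases (!(p.uc (Fin.cast h.symm 0))) p.lc j
  rel := Setoid.comap
    (Sum.elim (fun i => Sum.inl (Fin.cast h.symm i.succ))
      (fun j => Fin.cases (Sum.inl (Fin.cast h.symm (0 : Fin (m + 1))))
        (fun j' => Sum.inr j') j)) p.rel

/-- Rotation: move the leftmost lower point to the leftmost upper position,
switching its color. -/
def rotUp (p : CPartition) (m : ℕ) (h : p.l = m + 1) : CPartition where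
  k := p.k + 1
  l := m
  uc := fun i => Fin.cases (!(p.lc (Fin.cast h.symm 0))) p.uc i
  lc := fun j => p.lc (Fin.cast h.symm j.succ)
  rel := Setoid.comap
    (Sum.elim (fun i => Fin.cases (Sum.inr (Fin.cast h.symm (0 : Fin (m + 1))))
        (fun i' => Sum.inl i') i)
      (fun j => Sum.inr (Fin.cast h.symm j.succ))) p.rel

/-- The identity partition with coloring `c`. -/
def idPart {n : ℕ} (c : Fin n → Bool) : CPartition where
  k := n
  l := n
  uc := c
  lc := c
  rel := Setoid.ker (Sum.elim id id)

/-- A block (class) of `p` is a through-block when it contains both an upper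
and a lower point. -/
def IsThrough (p : CPartition) (c : Quotient p.rel) : Prop :=
  (∃ i : Fin p.k, Quotient.mk p.rel (Sum.inl i) = c) ∧
    (∃ j : Fin p.l, Quotient.mk p.rel (Sum.inr j) = c)

/-- The number `t(p)` of through-blocks of `p`. -/
noncomputable def t (p : CPartition) : ℕ := Nat.card {c : Quotient p.rel // p.IsThrough c}

/-- A projective partition: `pp = p = p*`. -/
def IsProjective (p : CPartition) : Prop :=
  ∃ h : p.l = p.k, vcomp p p h = p ∧ reflect p = p

/-- Equivalence of projective partitions in `C` : `p ∼ q` iff `r*r = p`, `rr* = q`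
for some `r ∈ C`. -/
def EquivIn (C : Set CPartition) (p q : CPartition) : Prop :=
  ∃ r ∈ C, vcomp r (reflect r) rfl = p ∧ vcomp (reflect r) r rfl = q

/-- Position of a point in the counterclockwise planar order. -/
def ptIdx (p : CPartition) : Fin p.k ⊕ Fin p.l → ℕ :=
  Sum.elim (fun i => (i : ℕ)) (fun j => p.k + (p.l - 1 - (j : ℕ)))

/-- A partition is noncrossing when its strings can be drawn without crossings. -/
def NonCrossing (p : CPartition) : Prop :=
  ∀ a b c d : Fin p.k ⊕ Fin p.l,
    p.ptIdx a < p.ptIdx b → p.ptIdx b < p.ptIdx c → p.ptIdx c < p.ptIdx d →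
    p.rel.r a c → p.rel.r b d → p.rel.r a b

/-- The one-block projective partition on `k + k` points, all colored `c`. -/
def piP (k : ℕ) (c : Bool) : CPartition :=
  ⟨k, k, fun _ => c, fun _ => c, ⊤⟩

/-- `π_k` for `k ∈ ℤ \ {0}` : one block, `|k| + |k|` points, white if `k > 0`,
black if `k < 0`. -/
def piZ (k : ℤ) : CPartition := piP k.natAbs (decide (0 < k))

/-- `π_{0⁺}`, the one-block projective partition with rows colored white–black. -/
def pi0plus : CPartition :=
  ⟨2, 2, ![true, false], ![true, false], ⊤⟩

/-- `θ_k` : one block of `k` points of color `c` on one row. -/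
def thetaP (k : ℕ) (c : Bool) : CPartition :=
  ⟨k, 0, fun _ => c, Fin.elim0, ⊤⟩

/-- `β_k = θ_k* θ_k` : one upper block and one lower block of `k` points each,
all of color `c`. -/
def betaP (k : ℕ) (c : Bool) : CPartition :=
  ⟨k, k, fun _ => c, fun _ => c, sumSetoid ⊤ ⊤⟩

/-- `β_k` for `k : ℤ` (white if `k > 0`, black if `k < 0`, empty if `k = 0`). -/
def betaZ (k : ℤ) : CPartition := betaP k.natAbs (decide (0 < k))

/-- Tensor powers, `tpow p 0` being the empty partition. -/
def tpow (p : CPartition) : ℕ → CPartition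
  | 0 => betaP 0 true
  | m + 1 => tensor (tpow p m) p

end CPartition

open CPartition

/-- A category of two-colored partitions: a class of partitions containing the
white identity and stable under horizontal concatenation, vertical concatenation
(when the colorings match), reflection and rotations. -/
structure PartitionCategory where
  mem : Set CPartition
  id_mem : idPart (fun _ : Fin 1 => true) ∈ mem
  tensor_mem : ∀ p q, p ∈ mem → q ∈ mem → tensor p q ∈ mem
  vcomp_mem : ∀ p q (h : p.l = q.k), p ∈ mem → q ∈ mem →
    (∀ j, p.lc j = q.uc (Fin.cast h j)) → vcomp p q h ∈ mem
  reflect_mem : ∀ p, p ∈ mem → reflect p ∈ mem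
  rotDown_mem : ∀ p, p ∈ mem → ∀ m (h : p.k = m + 1), rotDown p m h ∈ mem
  rotUp_mem : ∀ p, p ∈ mem → ∀ m (h : p.l = m + 1), rotUp p m h ∈ mem

section Helpers
open Sum

theorem CPartition.ext2 {p q : CPartition} (hk : p.k = q.k) (hl : p.l = q.l)
    (huc : ∀ i, p.uc i = q.uc (Fin.cast hk i)) (hlc : ∀ j, p.lc j = q.lc (Fin.cast hl j))
    (hrel : ∀ a b, p.rel.r a b ↔
      q.rel.r (Sum.map (Fin.cast hk) (Fin.cast hl) a) (Sum.map (Fin.cast hk) (Fin.cast hl) b)) :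
    p = q := by
  obtain ⟨k, l, uc, lc, rel⟩ := p
  obtain ⟨k', l', uc', lc', rel'⟩ := q
  dsimp at hk hl
  subst hk hl
  simp only [Fin.cast_refl, id] at huc hlc hrel
  have h1 : uc = uc' := funext huc
  have h2 : lc = lc' := funext hlc
  have h3 : rel = rel' := Setoid.ext fun a b => by simpa [Sum.map_id_id] using hrel a b
  subst h1 h2 h3
  rfl

theorem CPartition.rel_of_eq {p q : CPartition} (h : p = q) (hk : p.k = q.k) (hl : p.l = q.l) :
    ∀ a b, p.rel.r a b ↔
      q.rel.r (Sum.map (Fin.cast hk) (Fin.cast hl) a) (Sum.map (Fin.cast hk) (Fin.cast hl) b) := by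
  subst h
  intro a b
  simp [Sum.map_id_id]

theorem eqvGen_sub {α : Type*} {g : α → α → Prop} (Q : α → α → Prop) (hQ : Equivalence Q)
    (hg : ∀ a b, g a b → Q a b) {a b : α} (h : Relation.EqvGen g a b) : Q a b := by
  induction h with
  | rel x y h => exact hg _ _ h
  | refl => exact hQ.refl _
  | symm _ _ _ ih => exact hQ.symm ih
  | trans _ _ _ _ _ ih1 ih2 => exact hQ.trans ih1 ih2

theorem finCasesBool {n : ℕ} (b : Bool) (f : Fin n → Bool) (x : Fin (n + 1)) :
    (Fin.cases b f x : Bool) = if h : (x : ℕ) = 0 then b else f ⟨(x : ℕ) - 1, by omega⟩ := by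
  cases x using Fin.cases with
  | zero => simp
  | succ i => simp

end Helpers

section Ids
open Sum CPartition

/-- identity partition on m white strings -/
def idsP (m : ℕ) : CPartition := CPartition.idPart (fun _ : Fin m => true)

theorem sumker_liftRel {α β γ δ : Type*} (f : α → γ) (g : β → δ) (x y : α ⊕ β) :
    Sum.LiftRel (Function.onFun (· = ·) f) (Function.onFun (· = ·) g) x y ↔ Sum.map f g x = Sum.map f g y := by
  cases x <;> cases y <;> simp [Function.onFun]

theorem tensor_map_comp {m n : ℕ} (x : Fin (m + n) ⊕ Fin (m + n)) :
    Sum.map (Sum.elim id id) (Sum.elim id id)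
      (Equiv.sumSumSumComm (Fin m) (Fin n) (Fin m) (Fin n)
        (Sum.map (fun i => finSumFinEquiv.symm i) (fun j => finSumFinEquiv.symm j) x)) =
      finSumFinEquiv.symm (Sum.elim id id x) := by
  cases x with
  | inl i => rcases h : finSumFinEquiv.symm i with a | b <;>
      simp [h, Equiv.sumSumSumComm]
  | inr j => rcases h : finSumFinEquiv.symm j with a | b <;>
      simp [h, Equiv.sumSumSumComm]

theorem tensor_idsP (m n : ℕ) : CPartition.tensor (idsP m) (idsP n) = idsP (m + n) := by
  refine CPartition.ext2 rfl rfl (fun i => ?_) (fun j => ?_) (fun a b => ?_)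
  · cases h : finSumFinEquiv.symm i <;> simp [tensor, idsP, idPart, h]
  · cases h : finSumFinEquiv.symm j <;> simp [tensor, idsP, idPart, h]
  · show (sumSetoid (idsP m).rel (idsP n).rel).r _ _ ↔ _
    show Sum.LiftRel (Function.onFun (· = ·) (Sum.elim id id : Fin m ⊕ Fin m → Fin m))
        (Function.onFun (· = ·) (Sum.elim id id : Fin n ⊕ Fin n → Fin n))
        (Equiv.sumSumSumComm (Fin m) (Fin n) (Fin m) (Fin n)
          (Sum.map (fun i => finSumFinEquiv.symm i) (fun j => finSumFinEquiv.symm j) a))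
        (Equiv.sumSumSumComm (Fin m) (Fin n) (Fin m) (Fin n)
          (Sum.map (fun i => finSumFinEquiv.symm i) (fun j => finSumFinEquiv.symm j) b)) ↔ _
    refine Iff.trans (sumker_liftRel _ _ _ _) ?_
    refine Iff.trans (Eq.congr (tensor_map_comp (m := m) (n := n) a)
      (tensor_map_comp (m := m) (n := n) b)) ?_
    rw [EmbeddingLike.apply_eq_iff_eq]
    have hcast : ∀ (h : m + n = m + n) (x : Fin (m + n)), Fin.cast h x = x := fun _ _ => rfl
    rcases a with a | a <;> rcases b with b | b <;>
      exact Iff.rfl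

theorem idsP_mem (C : PartitionCategory) (m : ℕ) : idsP (m + 1) ∈ C.mem := by
  induction m with
  | zero => exact C.id_mem
  | succ k ih =>
      have h := C.tensor_mem _ _ ih (show idsP 1 ∈ C.mem from C.id_mem)
      rwa [show CPartition.tensor (idsP (k + 1)) (idsP 1) = idsP (k + 1 + 1) from
        tensor_idsP (k + 1) 1] at h

end Ids

theorem CPartition.uc_of_eq {p q : CPartition} (h : p = q) (hk : p.k = q.k) :
    ∀ i, p.uc i = q.uc (Fin.cast hk i) := by
  subst h
  intro i
  rfl

theorem CPartition.lc_of_eq {p q : CPartition} (h : p = q) (hl : p.l = q.l) :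
    ∀ j, p.lc j = q.lc (Fin.cast hl j) := by
  subst h
  intro j
  rfl

section Build
open Sum CPartition

theorem build (C : PartitionCategory) (s' : ℕ) (rel : Setoid (Fin (s' + 1 + 1) ⊕ Fin 1))
    (hrelTot : ∀ a b, rel.r a b)
    (hmem : (⟨s' + 1 + 1, 1, fun _ => true, fun _ => true, rel⟩ : CPartition) ∈ C.mem)
    (hpi1 : piZ 1 ∈ C.mem) :
    betaZ ((s' + 1 : ℕ) : ℤ) ∈ C.mem := by
  set R : CPartition := ⟨s' + 1 + 1, 1, fun _ => true, fun _ => true, rel⟩ with hRdef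
  have yC : rotUp R 0 rfl ∈ C.mem := C.rotUp_mem R hmem 0 rfl
  have capC : rotUp (piZ 1) 0 rfl ∈ C.mem := C.rotUp_mem _ hpi1 0 rfl
  set cup : CPartition := reflect (rotUp (piZ 1) 0 rfl) with hcupdef
  have cupC : cup ∈ C.mem := C.reflect_mem _ capC
  set p : CPartition := tensor cup (idsP (s' + 1)) with hpdef
  have pC : p ∈ C.mem := C.tensor_mem _ _ cupC (idsP_mem C s')
  have hpl : p.l = (rotUp R 0 rfl).k := by
    show Int.natAbs 1 + 1 + (s' + 1) = s' + 1 + 1 + 1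
    omega
  have hcol : ∀ j : Fin p.l, p.lc j = (rotUp R 0 rfl).uc (Fin.cast hpl j) := by
    intro j
    have hq : (rotUp R 0 rfl).uc (Fin.cast hpl j) =
        (Fin.cases false (fun _ => true) (Fin.cast hpl j) : Bool) := rfl
    rcases hj : finSumFinEquiv.symm j with a | b
    · have hjv : (j : ℕ) = (a : ℕ) := by
        have h2 : j = finSumFinEquiv (Sum.inl a) := by rw [← hj]; exact (Equiv.apply_symm_apply _ _).symm
        rw [h2, finSumFinEquiv_apply_left]
        simp
      have hlhs : p.lc j = (Fin.cases false (fun _ => true) a : Bool) := by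
        show Sum.elim cup.lc (idsP (s' + 1)).lc (finSumFinEquiv.symm j) = _
        rw [hj]
        rfl
      rw [hlhs, hq, finCasesBool]
      exact (finCasesBool (n := 1) false (fun _ => true) a).trans (by
        split_ifs with h1 h2 h2
        · rfl
        · exact (h2 (hjv.trans h1)).elim
        · exact (h1 (hjv.symm.trans h2)).elim
        · rfl)
    · have hcl : cup.l = 2 := rfl
      have hjv : (j : ℕ) = 2 + (b : ℕ) := by
        have h2 : j = finSumFinEquiv (Sum.inr b) := by rw [← hj]; exact (Equiv.apply_symm_apply _ _).symm
        rw [h2, finSumFinEquiv_apply_right]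
        simp [hcl]
      have hlhs : p.lc j = true := by
        show Sum.elim cup.lc (idsP (s' + 1)).lc (finSumFinEquiv.symm j) = _
        rw [hj]
        rfl
      have hne : ((Fin.cast hpl j : Fin _) : ℕ) ≠ 0 := by rw [Fin.coe_cast, hjv]; omega
      rw [hlhs, hq, finCasesBool]
      split_ifs with h
      · exact absurd h hne
      · rfl
  set y : CPartition := rotUp R 0 rfl with hydef
  set θ : CPartition := vcomp p y hpl with hθdef
  have θC : θ ∈ C.mem := C.vcomp_mem _ _ hpl pC yC hcol
  have getm : ∀ i : Fin (cup.k + (idsP (s' + 1)).k), ∃ m : Fin (cup.l + (idsP (s' + 1)).l),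
      p.rel.r (Sum.inl i) (Sum.inr m) := by
    intro i
    rcases hi : finSumFinEquiv.symm i with e | i'
    · exact e.elim0
    · refine ⟨finSumFinEquiv (Sum.inr i'), ?_⟩
      show (sumSetoid cup.rel (idsP (s' + 1)).rel).r
        (Equiv.sumSumSumComm (Fin cup.k) (Fin (idsP (s' + 1)).k) (Fin cup.l)
          (Fin (idsP (s' + 1)).l)
          (Sum.map (fun i => finSumFinEquiv.symm i) (fun j => finSumFinEquiv.symm j) (Sum.inl i)))
        (Equiv.sumSumSumComm (Fin cup.k) (Fin (idsP (s' + 1)).k) (Fin cup.l)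
          (Fin (idsP (s' + 1)).l)
          (Sum.map (fun i => finSumFinEquiv.symm i) (fun j => finSumFinEquiv.symm j)
            (Sum.inr (finSumFinEquiv (Sum.inr i')))))
      have e1 : Sum.map (fun i => finSumFinEquiv.symm i) (fun j => finSumFinEquiv.symm j)
          (Sum.inl i : Fin (cup.k + (idsP (s' + 1)).k) ⊕ Fin (cup.l + (idsP (s' + 1)).l)) =
          Sum.inl (Sum.inr i') := by rw [Sum.map_inl]; exact congrArg Sum.inl hi
      have e2 : Sum.map (fun i => finSumFinEquiv.symm i) (fun j => finSumFinEquiv.symm j)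
          (Sum.inr (finSumFinEquiv (Sum.inr i')) :
            Fin (cup.k + (idsP (s' + 1)).k) ⊕ Fin (cup.l + (idsP (s' + 1)).l)) =
          Sum.inr (Sum.inr i') := by simp; rfl
      rw [e1, e2]
      exact Sum.LiftRel.inr rfl
  have θTot : ∀ a b, θ.rel.r a b := by
    intro a b
    rcases a with i | e
    swap
    · exact e.elim0
    rcases b with j | e
    swap
    · exact e.elim0
    obtain ⟨mi, hmi⟩ := getm i
    obtain ⟨mj, hmj⟩ := getm j
    show Relation.EqvGen _ (Sum.map id Sum.inr (Sum.inl i)) (Sum.map id Sum.inr (Sum.inl j))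
    refine Relation.EqvGen.trans _ (Sum.inr (Sum.inl mi)) _
      (Relation.EqvGen.rel _ _ (Or.inl ⟨Sum.inl i, Sum.inr mi, hmi, rfl, rfl⟩)) ?_
    refine Relation.EqvGen.trans _ (Sum.inr (Sum.inl mj)) _
      (Relation.EqvGen.rel _ _ (Or.inr ⟨Sum.inl (Fin.cast hpl mi), Sum.inl (Fin.cast hpl mj),
        hrelTot _ _, rfl, rfl⟩)) ?_
    exact Relation.EqvGen.symm _ _
      (Relation.EqvGen.rel _ _ (Or.inl ⟨Sum.inl j, Sum.inr mj, hmj, rfl, rfl⟩))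
  have βC : vcomp θ (reflect θ) rfl ∈ C.mem :=
    C.vcomp_mem θ (reflect θ) rfl θC (C.reflect_mem _ θC) (fun j => Fin.elim0 j)
  have hbeta : vcomp θ (reflect θ) rfl = betaZ ((s' + 1 : ℕ) : ℤ) := by
    have hk : (vcomp θ (reflect θ) rfl).k = (betaZ ((s' + 1 : ℕ) : ℤ)).k := by
      show 0 + (s' + 1) = (((s' + 1 : ℕ) : ℤ)).natAbs
      omega
    have hl : (vcomp θ (reflect θ) rfl).l = (betaZ ((s' + 1 : ℕ) : ℤ)).l := hk
    have hucc : ∀ i : Fin p.k, p.uc i = true := by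
      intro i
      rcases hi : finSumFinEquiv.symm i with e | b
      · exact e.elim0
      · show Sum.elim cup.uc (idsP (s' + 1)).uc (finSumFinEquiv.symm i) = true
        rw [hi]
        rfl
    have hdec : (decide (0 < ((s' + 1 : ℕ) : ℤ)) : Bool) = true := by
      simp
    refine CPartition.ext2 hk hl (fun i => ?_) (fun j => ?_) (fun a b => ?_)
    · show p.uc i = decide (0 < ((s' + 1 : ℕ) : ℤ))
      rw [hucc i]
      exact hdec.symm
    · show p.uc j = decide (0 < ((s' + 1 : ℕ) : ℤ))
      rw [hucc j]
      exact hdec.symm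
    · constructor
      · intro h
        have hq := eqvGen_sub
          (Q := fun x y : Fin θ.k ⊕ (Fin θ.l ⊕ Fin (reflect θ).l) =>
            Sum.elim (fun _ => false) (Sum.elim (fun e => Fin.elim0 e) (fun _ => true)) x =
            Sum.elim (fun _ => false) (Sum.elim (fun e => Fin.elim0 e) (fun _ => true)) y)
          ⟨fun _ => rfl, Eq.symm, Eq.trans⟩ ?_ h
        · rcases a with i | i <;> rcases b with j | j
          · exact Sum.LiftRel.inl trivial
          · exact absurd hq Bool.false_ne_true
          · exact absurd hq (fun h => Bool.false_ne_true h.symm)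
          · exact Sum.LiftRel.inr trivial
        · rintro x y (⟨a', b', hr, rfl, rfl⟩ | ⟨a', b', hr, rfl, rfl⟩)
          · rcases a' with i | e
            · rcases b' with j | e
              · rfl
              · exact e.elim0
            · exact e.elim0
          · rcases a' with e | i
            · exact e.elim0
            · rcases b' with e | j
              · exact e.elim0
              · rfl
      · intro h
        rcases a with i | i <;> rcases b with j | j
        · exact Relation.EqvGen.rel _ _ (Or.inl ⟨Sum.inl i, Sum.inl j, θTot _ _, rfl, rfl⟩)
        · cases h
        · cases h
        · exact Relation.EqvGen.rel _ _ (Or.inr ⟨Sum.inr i, Sum.inr j, θTot (Sum.inl i) (Sum.inl j), rfl, rfl⟩)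
  rw [← hbeta]
  exact βC

end Build

/-- if `C` is a category of noncrossing colored partitions with
`I(C) = ℤ \ {0}`, `S(C) = ℤ_s` for a finite `s ≥ 1` (i.e. `π_k ∼ π_{k'}` iff
`k ≡ k' mod s`) and `J(C) = nℤ` (i.e. `β_k ∈ C` iff `n ∣ k`), then `n` divides
`s`. -/
theorem n_divides_s (C : PartitionCategory)
    (hnc : ∀ p ∈ C.mem, p.NonCrossing)
    (hI : ∀ k : ℤ, k ≠ 0 → piZ k ∈ C.mem)
    (s n : ℕ) (hs : 1 ≤ s)
    (hS : ∀ k k' : ℤ, k ≠ 0 → k' ≠ 0 →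
      (EquivIn C.mem (piZ k) (piZ k') ↔ (s : ℤ) ∣ (k - k')))
    (hJ : ∀ k : ℤ, betaZ k ∈ C.mem ↔ (n : ℤ) ∣ k) :
    n ∣ s := by
  classical
  obtain ⟨s', rfl⟩ : ∃ s', s = s' + 1 := ⟨s - 1, by omega⟩
  have hk1 : ((s' + 1 : ℕ) : ℤ) + 1 ≠ 0 := by
    have : (0 : ℤ) < ((s' + 1 : ℕ) : ℤ) + 1 := by positivity
    omega
  have hdvd : ((s' + 1 : ℕ) : ℤ) ∣ (((s' + 1 : ℕ) : ℤ) + 1 - 1) := by simp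
  obtain ⟨r, hrC, hA, hB⟩ := (hS (((s' + 1 : ℕ) : ℤ) + 1) 1 hk1 one_ne_zero).mpr hdvd
  have hpiS : piZ (((s' + 1 : ℕ) : ℤ) + 1) = piP (s' + 1 + 1) true := by
    have h1 : (((s' + 1 : ℕ) : ℤ) + 1).natAbs = s' + 1 + 1 := by omega
    have h2 : (decide ((0:ℤ) < ((s' + 1 : ℕ) : ℤ) + 1) : Bool) = true := by
      simp
      positivity
    show piP (((s' + 1 : ℕ) : ℤ) + 1).natAbs (decide ((0:ℤ) < ((s' + 1 : ℕ) : ℤ) + 1)) = _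
    rw [h1, h2]
  have hpi1 : piZ (1 : ℤ) = piP 1 true := rfl
  rw [hpiS] at hA
  rw [hpi1] at hB
  obtain ⟨k, l, uc, lc, rel⟩ := r
  have hk : k = s' + 1 + 1 := congrArg CPartition.k hA
  have hl : l = 1 := congrArg CPartition.k hB
  subst hk hl
  have hucE : uc = fun _ => true := funext fun i => CPartition.uc_of_eq hA rfl i
  have hlcE : lc = fun _ => true := funext fun j => CPartition.lc_of_eq hB rfl j
  subst hucE hlcE
  -- rel is total
  have key1 : ∀ x y : Fin (s' + 1 + 1) ⊕ Fin (s' + 1 + 1),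
      (vcomp (⟨s' + 1 + 1, 1, fun _ => true, fun _ => true, rel⟩ : CPartition)
        (reflect ⟨s' + 1 + 1, 1, fun _ => true, fun _ => true, rel⟩) rfl).rel.r x y :=
    fun x y => (CPartition.rel_of_eq hA rfl rfl x y).mpr trivial
  have key2 : ∀ x y : Fin 1 ⊕ Fin 1,
      (vcomp (reflect ⟨s' + 1 + 1, 1, fun _ => true, fun _ => true, rel⟩)
        (⟨s' + 1 + 1, 1, fun _ => true, fun _ => true, rel⟩ : CPartition) rfl).rel.r x y :=
    fun x y => (CPartition.rel_of_eq hB rfl rfl x y).mpr trivial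
  have upperRel : ∀ i j : Fin (s' + 1 + 1), rel.r (Sum.inl i) (Sum.inl j) := by
    intro i j
    have h : Relation.EqvGen
        (fun x y : Fin (s' + 1 + 1) ⊕ (Fin 1 ⊕ Fin (s' + 1 + 1)) =>
          (∃ a b, rel.r a b ∧ Sum.map id Sum.inl a = x ∧ Sum.map id Sum.inl b = y) ∨
          (∃ a b, (Setoid.comap Sum.swap rel).r a b ∧
            Sum.inr (Sum.map (Fin.cast rfl) id a) = x ∧
            Sum.inr (Sum.map (Fin.cast rfl) id b) = y))
        (Sum.inl i) (Sum.inl j) := key1 (Sum.inl i) (Sum.inl j)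
    have hq := eqvGen_sub
      (Q := fun x y : Fin (s' + 1 + 1) ⊕ (Fin 1 ⊕ Fin (s' + 1 + 1)) =>
        rel.r (Sum.elim Sum.inl (Sum.elim Sum.inr Sum.inl) x)
          (Sum.elim Sum.inl (Sum.elim Sum.inr Sum.inl) y))
      ⟨fun _ => rel.iseqv.refl _, fun h => rel.iseqv.symm h, fun h h' => rel.iseqv.trans h h'⟩
      ?_ h
    · exact hq
    · rintro x y (⟨a', b', hr, rfl, rfl⟩ | ⟨a', b', hr, rfl, rfl⟩)
      · rcases a' with i' | m <;> rcases b' with j' | m' <;> exact hr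
      · rcases a' with m | i' <;> rcases b' with m' | j' <;> exact hr
  have conn : ∃ j : Fin (s' + 1 + 1), rel.r (Sum.inl j) (Sum.inr 0) := by
    by_contra hc
    push_neg at hc
    have h : Relation.EqvGen
        (fun x y : Fin 1 ⊕ (Fin (s' + 1 + 1) ⊕ Fin 1) =>
          (∃ a b, (Setoid.comap Sum.swap rel).r a b ∧
            Sum.map id Sum.inl a = x ∧ Sum.map id Sum.inl b = y) ∨
          (∃ a b, rel.r a b ∧
            Sum.inr (Sum.map (Fin.cast rfl) id a) = x ∧
            Sum.inr (Sum.map (Fin.cast rfl) id b) = y))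
        (Sum.inl 0) (Sum.inr (Sum.inr 0)) := key2 (Sum.inl 0) (Sum.inr 0)
    have hq := eqvGen_sub
      (Q := fun x y : Fin 1 ⊕ (Fin (s' + 1 + 1) ⊕ Fin 1) =>
        Sum.elim (fun _ => (0 : ℕ)) (Sum.elim (fun _ => 1) (fun _ => 2)) x =
        Sum.elim (fun _ => (0 : ℕ)) (Sum.elim (fun _ => 1) (fun _ => 2)) y)
      ⟨fun _ => rfl, Eq.symm, Eq.trans⟩ ?_ h
    · simp at hq
    · rintro x y (⟨a', b', hr, rfl, rfl⟩ | ⟨a', b', hr, rfl, rfl⟩)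
      · rcases a' with m | i' <;> rcases b' with m' | j'
        · rfl
        · have hm : m = 0 := Subsingleton.elim m 0
          rw [hm] at hr
          exact absurd (rel.iseqv.symm hr) (hc j')
        · have hm : m' = 0 := Subsingleton.elim m' 0
          rw [hm] at hr
          exact absurd hr (hc i')
        · rfl
      · rcases a' with i' | m <;> rcases b' with j' | m'
        · rfl
        · have hm : m' = 0 := Subsingleton.elim m' 0
          rw [hm] at hr
          exact absurd hr (hc i')
        · have hm : m = 0 := Subsingleton.elim m 0
          rw [hm] at hr
          exact absurd (rel.iseqv.symm hr) (hc j')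
        · rfl
  obtain ⟨j0, hj0⟩ := conn
  have allRel : ∀ a b : Fin (s' + 1 + 1) ⊕ Fin 1, rel.r a b := by
    have h0 : ∀ m : Fin 1, m = 0 := fun m => Subsingleton.elim m 0
    rintro (i | m) (j | m')
    · exact upperRel i j
    · rw [h0 m']
      exact rel.iseqv.trans (upperRel i j0) hj0
    · rw [h0 m]
      exact rel.iseqv.symm (rel.iseqv.trans (upperRel j j0) hj0)
    · have hm : m = m' := Subsingleton.elim m m'
      rw [hm]
  have hbmem := build C s' rel allRel hrC (hI 1 one_ne_zero)
  have := (hJ ((s' + 1 : ℕ) : ℤ)).mp hbmem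
  exact_mod_cast this
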